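/- Let X be a finite set with a distinguished element x₀, Y a finite set, and W a channel assigning to each x ∈ X a pmf W(·|x) on Y with W(y|x₀) > 0 for all y. Fix x₁ ∈ X with x₁ ≠ x₀. For α ∈ ℝ let I(α) denote the mutual information of the joint function on X × Y given by (x,y) ↦ ((1−α)·1{x = x₀} + α·1{x = x₁})·W(y|x). Then the map α ↦ I(α) has a derivative at α = 0, equal to D(W(·|x₁) ‖ W(·|x₀)). -/

import Mathlib

open Real

/-- Kullback–Leibler divergence of finite-alphabet "distributions" `p`, `q`. -/
noncomputable def klDiv {Z : Type*} [Fintype Z] (p q : Z → ℝ) : ℝ :=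
  ∑ z, p z * (Real.log (p z) - Real.log (q z))

/-- Mutual information of a joint function `P` on a product of finite alphabets. -/
noncomputable def mutualInfo {U Y : Type*} [Fintype U] [Fintype Y] (P : U → Y → ℝ) : ℝ :=
  ∑ u, ∑ y, P u y *
    (Real.log (P u y) - Real.log (∑ y', P u y') - Real.log (∑ u', P u' y))

theorem stmt_12 {X Y : Type*} [Fintype X] [Fintype Y] [DecidableEq X]
    (x₀ x₁ : X) (hne : x₁ ≠ x₀) (W : X → Y → ℝ)
    (hW0 : ∀ x y, 0 ≤ W x y) (hW1 : ∀ x, ∑ y, W x y = 1) (hWpos : ∀ y, 0 < W x₀ y) :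
    HasDerivAt (fun α : ℝ => mutualInfo (fun (x : X) (y : Y) =>
        ((1 - α) * (if x = x₀ then 1 else 0) + α * (if x = x₁ then 1 else 0)) * W x y))
      (klDiv (W x₁) (W x₀)) 0 := by
  classical
  have hx01 : x₀ ≠ x₁ := Ne.symm hne
  set g : ℝ → ℝ := fun α => ∑ y, ((1 - α) * W x₀ y * Real.log (W x₀ y)
      + α * W x₁ y * Real.log (W x₁ y)
      - ((1 - α) * W x₀ y + α * W x₁ y) * Real.log ((1 - α) * W x₀ y + α * W x₁ y))
    with hgdef
  have hgd : HasDerivAt g (klDiv (W x₁) (W x₀)) 0 := by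
    have key : HasDerivAt g
        (∑ y, (W x₁ y * Real.log (W x₁ y) - W x₁ y * Real.log (W x₀ y)
          - W x₁ y + W x₀ y)) 0 := by
      apply HasDerivAt.fun_sum
      intro y _
      have hq : HasDerivAt (fun α : ℝ => (1 - α) * W x₀ y + α * W x₁ y)
          (W x₁ y - W x₀ y) 0 := by
        have h1 : HasDerivAt (fun α : ℝ => (1 - α) * W x₀ y) (-(W x₀ y)) 0 := by
          simpa using ((hasDerivAt_id (0:ℝ)).const_sub 1).mul_const (W x₀ y)
        have h2 : HasDerivAt (fun α : ℝ => α * W x₁ y) (W x₁ y) 0 := by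
          simpa using (hasDerivAt_id (0:ℝ)).mul_const (W x₁ y)
        have := h1.add h2
        refine this.congr_deriv ?_
        ring
      have hq0 : (1 - (0:ℝ)) * W x₀ y + 0 * W x₁ y ≠ 0 := by
        have := (hWpos y).ne'
        simpa using this
      have hml := Real.hasDerivAt_mul_log hq0
      have hcomp := hml.comp 0 hq
      have h1 : HasDerivAt (fun α : ℝ => (1 - α) * W x₀ y * Real.log (W x₀ y))
          (-(W x₀ y * Real.log (W x₀ y))) 0 := by
        simpa [mul_comm, mul_left_comm, mul_assoc] using
          (((hasDerivAt_id (0:ℝ)).const_sub 1).mul_const (W x₀ y * Real.log (W x₀ y)))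
      have h2 : HasDerivAt (fun α : ℝ => α * W x₁ y * Real.log (W x₁ y))
          (W x₁ y * Real.log (W x₁ y)) 0 := by
        simpa [mul_assoc] using (hasDerivAt_id (0:ℝ)).mul_const (W x₁ y * Real.log (W x₁ y))
      have := (h1.add h2).sub hcomp
      refine this.congr_deriv ?_
      have hpt : (1 - (0:ℝ)) * W x₀ y + 0 * W x₁ y = W x₀ y := by ring
      rw [hpt]
      ring
    have hval : (∑ y, (W x₁ y * Real.log (W x₁ y) - W x₁ y * Real.log (W x₀ y)
          - W x₁ y + W x₀ y)) = klDiv (W x₁) (W x₀) := by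
      have : (∑ y, (W x₁ y * Real.log (W x₁ y) - W x₁ y * Real.log (W x₀ y)
          - W x₁ y + W x₀ y))
          = (∑ y, W x₁ y * (Real.log (W x₁ y) - Real.log (W x₀ y)))
            + ((∑ y, W x₀ y) - ∑ y, W x₁ y) := by
        rw [← Finset.sum_sub_distrib, ← Finset.sum_add_distrib]
        apply Finset.sum_congr rfl
        intro y _
        ring
      rw [this, hW1, hW1, klDiv]
      ring
    rwa [hval] at key
  have heq : ∀ α : ℝ, α ≠ 1 →
      mutualInfo (fun (x : X) (y : Y) =>
        ((1 - α) * (if x = x₀ then 1 else 0) + α * (if x = x₁ then 1 else 0)) * W x y)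
      = g α := by
    intro α hα
    have h1α : (1:ℝ) - α ≠ 0 := sub_ne_zero_of_ne (Ne.symm hα)
    simp only [mutualInfo]
    have hrow : ∀ x : X,
        (∑ y', ((1 - α) * (if x = x₀ then 1 else 0) + α * (if x = x₁ then 1 else 0)) * W x y')
        = ((1 - α) * (if x = x₀ then 1 else 0) + α * (if x = x₁ then 1 else 0)) := by
      intro x
      rw [← Finset.mul_sum, hW1, mul_one]
    have hcol : ∀ y : Y,
        (∑ x', ((1 - α) * (if x' = x₀ then 1 else 0) + α * (if x' = x₁ then 1 else 0)) * W x' y)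
        = (1 - α) * W x₀ y + α * W x₁ y := by
      intro y
      simp [add_mul, mul_assoc, ite_mul, mul_ite, Finset.sum_add_distrib,
        Finset.sum_ite_eq', mul_one, one_mul, mul_zero, zero_mul]
    simp only [hrow, hcol]
    rw [← Finset.sum_subset (Finset.subset_univ ({x₀, x₁} : Finset X))]
    · rw [Finset.sum_pair hx01]
      simp only [eq_self_iff_true, if_true, if_neg hx01, if_neg hne, mul_one, mul_zero, add_zero, zero_add]
      rw [hgdef, ← Finset.sum_add_distrib]
      apply Finset.sum_congr rfl
      intro y _
      rw [Real.log_mul h1α (hWpos y).ne']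
      rcases eq_or_ne α 0 with h0 | h0
      · subst h0; ring
      · rcases eq_or_ne (W x₁ y) 0 with hb | hb
        · rw [hb]; ring
        · rw [Real.log_mul h0 hb]; ring
    · intro x _ hx
      simp only [Finset.mem_insert, Finset.mem_singleton] at hx
      push_neg at hx
      simp [if_neg hx.1, if_neg hx.2]
  have hev : ∀ᶠ α in nhds (0:ℝ), α ≠ 1 := eventually_ne_nhds (by norm_num)
  exact hgd.congr_of_eventuallyEq (hev.mono fun α hα => heq α hα)
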